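/- Let r > d > 0 and let x, y be nonzero reals. Then Q(x,y) = 0 and Q(y,x) = 0 if and only if (x,y) = (1,1) or (x,y) = (r/d, r/d); i.e., the only stationary solutions of the characteristic system are (1,1) and (r/d, r/d). -/

import Mathlib

/-- The coefficient `Q(x,y) = (r+d)x − r/2 − (r/2)(x/y) − d·x²`. -/
noncomputable def Qfun (r d x y : ℝ) : ℝ :=
  (r + d) * x - r / 2 - r / 2 * (x / y) - d * x ^ 2

/-- the only stationary solutions of the characteristic system are
`(1,1)` and `(r/d, r/d)`. -/
theorem stationary_points (r d x y : ℝ) (hd : 0 < d) (hrd : d < r)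
    (hx : x ≠ 0) (hy : y ≠ 0) :
    (Qfun r d x y = 0 ∧ Qfun r d y x = 0) ↔
      ((x, y) = ((1 : ℝ), (1 : ℝ)) ∨ (x, y) = (r / d, r / d)) := by
  have hd0 : d ≠ 0 := ne_of_gt hd
  have hr0 : r ≠ 0 := ne_of_gt (lt_trans hd hrd)
  constructor
  · rintro ⟨h1, h2⟩
    rw [Qfun] at h1 h2
    field_simp at h1 h2
    have hQ1 : (r + d) * x * y - r / 2 * y - r / 2 * x - d * x ^ 2 * y = 0 := by
      linear_combination h1 / 2
    have hQ2 : (r + d) * y * x - r / 2 * x - r / 2 * y - d * y ^ 2 * x = 0 := by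
      linear_combination h2 / 2
    have hxy : d * x * y * (y - x) = 0 := by linear_combination hQ1 - hQ2
    have hyx : x = y := by
      rcases mul_eq_zero.1 hxy with h | h
      · rcases mul_eq_zero.1 h with h | h
        · rcases mul_eq_zero.1 h with h | h
          · exact absurd h hd0
          · exact absurd h hx
        · exact absurd h hy
      · linarith [sub_eq_zero.1 h]
    subst hyx
    have hfac : (x - 1) * (d * x - r) * x = 0 := by linear_combination -hQ1
    rcases mul_eq_zero.1 hfac with h | h
    · rcases mul_eq_zero.1 h with h | h
      · left
        have : x = 1 := by linarith [sub_eq_zero.1 h]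
        simp [this]
      · right
        have : x = r / d := by field_simp; linarith
        simp [this]
    · exact absurd h hx
  · rintro (h | h) <;>
      obtain ⟨h1, h2⟩ := Prod.mk.injEq .. ▸ h <;> subst h1 <;> subst h2 <;>
      constructor <;> rw [Qfun] <;> field_simp <;> ring
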